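/- Let g: ℝⁿ → ℝ be convex and differentiable, and let λ_a, λ_b ≥ 0 be real numbers and x_a, x_b ∈ ℝⁿ. Then (x_a − x_b)ᵀ(λ_a ∇g(x_a) − λ_b ∇g(x_b)) − (λ_a − λ_b)(g(x_a) − g(x_b)) ≥ 0. -/
import Mathlib


open RealInnerProductSpace

private lemma grad_ineq {n : ℕ} (g : EuclideanSpace ℝ (Fin n) → ℝ)
    (G : EuclideanSpace ℝ (Fin n) → EuclideanSpace ℝ (Fin n))
    (hgconv : ConvexOn ℝ Set.univ g)
    (hggrad : ∀ x, HasGradientAt g (G x) x)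
    (x y : EuclideanSpace ℝ (Fin n)) :
    ⟪G x, y - x⟫ ≤ g y - g x := by
  set L : ℝ →ᵃ[ℝ] EuclideanSpace ℝ (Fin n) := AffineMap.lineMap x y with hL
  have hLapp : ∀ t : ℝ, L t = x + t • (y - x) := by
    intro t; simp [hL, AffineMap.lineMap_apply]; module
  have hφconv : ConvexOn ℝ Set.univ (g ∘ L) := by
    have := hgconv.comp_affineMap L
    simpa using this
  have hderiv : HasDerivAt (g ∘ L) ⟪G x, y - x⟫ 0 := by
    have hline : HasDerivAt (fun t : ℝ => x + t • (y - x)) (y - x) 0 := by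
      simpa using ((hasDerivAt_id (0:ℝ)).smul_const (y - x)).const_add x
    have := ((hggrad (L 0)).hasFDerivAt.comp_hasDerivAt 0
      (by simpa [funext hLapp] using hline) : HasDerivAt (g ∘ L) _ 0)
    simpa [hLapp, real_inner_smul_left] using this
  have h01 : (0:ℝ) < 1 := one_pos
  have := hφconv.le_slope_of_hasDerivAt (Set.mem_univ 0) (Set.mem_univ 1) h01 hderiv
  rw [slope_def_field] at this
  have h0 : L 0 = x := by simp [hLapp]
  have h1 : L 1 = y := by simp [hLapp]
  simpa [h0, h1] using this

/-- Single-constraint KKT monotonicity inequality. -/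
theorem stmt_11 {n : ℕ} (g : EuclideanSpace ℝ (Fin n) → ℝ)
    (G : EuclideanSpace ℝ (Fin n) → EuclideanSpace ℝ (Fin n))
    (hgconv : ConvexOn ℝ Set.univ g)
    (hggrad : ∀ x, HasGradientAt g (G x) x)
    (lama lamb : ℝ) (hla : 0 ≤ lama) (hlb : 0 ≤ lamb)
    (xa xb : EuclideanSpace ℝ (Fin n)) :
    0 ≤ ⟪xa - xb, lama • G xa - lamb • G xb⟫ - (lama - lamb) * (g xa - g xb) := by
  have ha := grad_ineq g G hgconv hggrad xa xb
  have hb := grad_ineq g G hgconv hggrad xb xa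
  have hinner : ⟪xa - xb, lama • G xa - lamb • G xb⟫
      = lama * ⟪G xa, xa - xb⟫ - lamb * ⟪G xb, xa - xb⟫ := by
    rw [inner_sub_right, real_inner_smul_right, real_inner_smul_right,
      real_inner_comm (xa - xb) (G xa), real_inner_comm (xa - xb) (G xb)]
  have hsub : ⟪G xa, xb - xa⟫ = -⟪G xa, xa - xb⟫ := by
    rw [← inner_neg_right]; congr 1; abel
  rw [hinner]
  rw [hsub] at ha
  nlinarith [mul_le_mul_of_nonneg_left ha hla, mul_le_mul_of_nonneg_left hb hlb]
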